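/- Let N ≥ 1 be an integer, π = (π¹,…,π^N) ∈ [0,1]^N, and b = (b¹,…,b^N) ∈ ℝ^N. Set w̄ := (1/N)·Σ_{j=1}^N π^j/(1+π^j). Then w̄ ≤ 1/2, so that 1 − w̄ ≥ 1/2 > 0, and the equilibrium drift system has a unique solution B ∈ ℝ^N, given explicitly by B^i = (S + b^i)/(1 + π^i) for every i, where S := [(1/N)·Σ_{j=1}^N (π^j/(1+π^j))·b^j]/(1 − w̄). Moreover this S satisfies S = (1/N)·Σ_{j=1}^N π^j B^j. -/

import Mathlib

open Finset

private lemma aux_drift (c p bi : ℝ) (hp : 1 + p ≠ 0) :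
    (c + bi)/(1+p) = c - p * ((c + bi)/(1+p)) + bi := by
  field_simp
  ring

/-- The equilibrium drift system `B^i = (1/N) ∑_j π^j B^j - π^i B^i + b^i` has a
unique solution, given explicitly by `B^i = (S + b^i)/(1 + π^i)` with
`S = [(1/N) ∑_j (π^j/(1+π^j)) b^j] / (1 - w̄)`, where
`w̄ = (1/N) ∑_j π^j/(1+π^j) ≤ 1/2`; moreover `S = (1/N) ∑_j π^j B^j`. -/
theorem equilibrium_drift_system_solution
    (N : ℕ) (hN : 1 ≤ N) (π b : Fin N → ℝ)
    (hπ : ∀ i, π i ∈ Set.Icc (0 : ℝ) 1) :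
    (1 / (N : ℝ)) * ∑ j, π j / (1 + π j) ≤ 1 / 2 ∧
    (∃! B : Fin N → ℝ,
      ∀ i, B i = (1 / (N : ℝ)) * ∑ j, π j * B j - π i * B i + b i) ∧
    (∀ B : Fin N → ℝ,
      (∀ i, B i = (1 / (N : ℝ)) * ∑ j, π j * B j - π i * B i + b i) →
      (∀ i, B i =
        (((1 / (N : ℝ)) * ∑ j, (π j / (1 + π j)) * b j) /
            (1 - (1 / (N : ℝ)) * ∑ j, π j / (1 + π j)) + b i) / (1 + π i)) ∧
      ((1 / (N : ℝ)) * ∑ j, (π j / (1 + π j)) * b j) /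
          (1 - (1 / (N : ℝ)) * ∑ j, π j / (1 + π j)) =
        (1 / (N : ℝ)) * ∑ j, π j * B j) := by
  have hNpos : (0:ℝ) < (N:ℝ) := by exact_mod_cast hN
  have h1π : ∀ i, (0:ℝ) < 1 + π i := fun i => by have := (hπ i).1; linarith
  have h1πne : ∀ i, (1:ℝ) + π i ≠ 0 := fun i => ne_of_gt (h1π i)
  set w : ℝ := (1 / (N : ℝ)) * ∑ j, π j / (1 + π j) with hw
  set T : ℝ := (1 / (N : ℝ)) * ∑ j, (π j / (1 + π j)) * b j with hT
  have hwle : w ≤ 1/2 := by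
    have hsum : ∑ j, π j / (1 + π j) ≤ (N:ℝ) * (1/2) := by
      calc ∑ j, π j / (1 + π j) ≤ ∑ _j : Fin N, (1/2:ℝ) := by
            apply Finset.sum_le_sum
            intro i _
            have h0 := (hπ i).1; have h1 := (hπ i).2
            rw [div_le_iff₀ (h1π i)]; linarith
        _ = (N:ℝ) * (1/2) := by simp [Finset.sum_const, mul_comm]
    calc w ≤ (1/(N:ℝ)) * ((N:ℝ) * (1/2)) := by
          apply mul_le_mul_of_nonneg_left hsum (by positivity)
      _ = 1/2 := by field_simp
  have hwne : (1:ℝ) - w ≠ 0 := by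
    have : (0:ℝ) < 1 - w := by linarith
    exact ne_of_gt this
  set S : ℝ := T / (1 - w) with hS
  have hSTw : w * S + T = S := by
    rw [hS]; field_simp; ring
  -- general sum computation
  have hkey : ∀ x : ℝ, (1/(N:ℝ)) * ∑ j, π j * ((x + b j)/(1+π j)) = w * x + T := by
    intro x
    have : ∀ j : Fin N, π j * ((x + b j)/(1+π j))
        = (π j / (1 + π j)) * x + (π j / (1 + π j)) * b j := by
      intro j; field_simp
    rw [Finset.sum_congr rfl fun j _ => this j, Finset.sum_add_distrib,
      ← Finset.sum_mul, mul_add, hw, hT]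
    ring
  -- the explicit solution
  set B0 : Fin N → ℝ := fun i => (S + b i)/(1+π i) with hB0
  have hsumB0 : (1/(N:ℝ)) * ∑ j, π j * B0 j = S := by
    rw [hB0]; simpa using (hkey S).trans hSTw
  have hB0sol : ∀ i, B0 i = (1/(N:ℝ)) * ∑ j, π j * B0 j - π i * B0 i + b i := by
    intro i
    rw [hsumB0]
    show (S + b i)/(1+π i) = S - π i * ((S + b i)/(1+π i)) + b i
    exact aux_drift S (π i) (b i) (h1πne i)
  -- any solution equals B0
  have hchar : ∀ B : Fin N → ℝ,
      (∀ i, B i = (1/(N:ℝ)) * ∑ j, π j * B j - π i * B i + b i) →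
      (1/(N:ℝ)) * ∑ j, π j * B j = S ∧ ∀ i, B i = B0 i := by
    intro B hB
    set SB : ℝ := (1/(N:ℝ)) * ∑ j, π j * B j with hSB
    have hBi : ∀ i, B i = (SB + b i)/(1+π i) := by
      intro i
      have h := hB i
      rw [eq_div_iff (h1πne i)]
      linear_combination h
    have hSBeq : SB = w * SB + T := by
      conv_lhs => rw [hSB, Finset.sum_congr rfl fun j _ => by rw [hBi j]]
      exact hkey SB
    have hSBS : SB = S := by
      have h1 : SB * (1 - w) = T := by linarith [hSBeq]
      rw [hS, eq_div_iff hwne]; exact h1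
    refine ⟨hSBS, fun i => ?_⟩
    rw [hBi i, hSBS, hB0]
  refine ⟨hwle, ⟨B0, hB0sol, fun B hB => funext fun i => (hchar B hB).2 i⟩, ?_⟩
  intro B hB
  obtain ⟨h1, h2⟩ := hchar B hB
  constructor
  · intro i; rw [h2 i, hB0]
  · rw [h1]
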